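/- Let G be a finitely generated group whose word problem WP(G) is recursively enumerable, and let X ⊆ A^G be an effectively closed subshift. Then the maximal set of pattern codings defining X, namely C_max = {c a pattern coding over A : X ∩ ⋂_{(w,a)∈c} [a]_{w̄} = ∅}, is recursively enumerable, and X = X_{C_max}. -/

import Mathlib

open scoped Classical

noncomputable section

namespace SDG

/-! ### Relativized computability -/

/-- Partial recursive functions `ℕ →. ℕ` relative to an oracle `O`. -/
inductive NatPartrecIn (O : ℕ →. ℕ) : (ℕ →. ℕ) → Prop
  | oracle : NatPartrecIn O O
  | zero : NatPartrecIn O (pure 0)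
  | succ : NatPartrecIn O Nat.succ
  | left : NatPartrecIn O ↑fun n : ℕ => n.unpair.1
  | right : NatPartrecIn O ↑fun n : ℕ => n.unpair.2
  | pair {f g} : NatPartrecIn O f → NatPartrecIn O g →
      NatPartrecIn O fun n => Nat.pair <$> f n <*> g n
  | comp {f g} : NatPartrecIn O f → NatPartrecIn O g →
      NatPartrecIn O fun n => g n >>= f
  | prec {f g} : NatPartrecIn O f → NatPartrecIn O g →
      NatPartrecIn O (Nat.unpaired fun a n =>
        n.rec (f a) fun y IH => do let i ← IH; g (Nat.pair a (Nat.pair y i)))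
  | rfind {f} : NatPartrecIn O f →
      NatPartrecIn O fun a => Nat.rfind fun n => (fun m => m = 0) <$> f (Nat.pair a n)

/-- A partial function between `Primcodable` types is partial recursive in the oracle `O`. -/
def PartrecIn (O : ℕ →. ℕ) {α σ : Type} [Primcodable α] [Primcodable σ] (f : α →. σ) : Prop :=
  NatPartrecIn O fun n =>
    Part.bind (Part.ofOption (Encodable.decode (α := α) n)) fun a => (f a).map Encodable.encode

/-- A predicate is recursively enumerable in the oracle `O` if it is the domain of a partial
function recursive in `O`. -/
def RePredIn (O : ℕ →. ℕ) {α : Type} [Primcodable α] (p : α → Prop) : Prop :=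
  PartrecIn O fun a => Part.assert (p a) fun _ => Part.some ()

/-- The characteristic function (as an oracle `ℕ →. ℕ`) of a set `L` of elements of a
`Primcodable` type: on the code of an element of `L` it answers `1`, elsewhere `0`. -/
def charFun {α : Type} [Primcodable α] (L : Set α) : ℕ →. ℕ :=
  fun n => Part.some (if ∃ a ∈ L, Encodable.encode a = n then 1 else 0)

/-! ### Finitely generated groups, words and pattern codings -/

variable {G : Type} [Group G]

/-- The group element represented by a word over the generators `S`. -/
def wordEval {k : ℕ} (S : Fin k → G) (w : List (Fin k)) : G :=
  (w.map S).prod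

/-- `S : Fin k → G` is a finite symmetric generating family containing the identity. -/
def IsGenData {k : ℕ} (S : Fin k → G) : Prop :=
  (∃ i, S i = 1) ∧ (∀ i, ∃ j, S j = (S i)⁻¹) ∧ Subgroup.closure (Set.range S) = ⊤

/-- The word problem of `G` with respect to the generating family `S`. -/
def WP {k : ℕ} (S : Fin k → G) : Set (List (Fin k)) :=
  {w | wordEval S w = 1}

/-- A pattern coding over the alphabet `A`: a finite list of pairs (word, symbol). -/
abbrev PatternCoding (k : ℕ) (A : Type) : Type :=
  List (List (Fin k) × A)

/-- The subshift defined by a set `C` of pattern codings: configurations in which no translate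
of a coded pattern occurs. -/
def XC {k : ℕ} (S : Fin k → G) {A : Type} (C : Set (PatternCoding k A)) : Set (G → A) :=
  {x | ¬ ∃ (g : G) (c : PatternCoding k A), c ∈ C ∧ ∀ p ∈ c, x (g * wordEval S p.1) = p.2}

/-- A set is effectively closed if it is defined by a recursively enumerable set of
pattern codings. -/
def EffectivelyClosed {k : ℕ} (S : Fin k → G) {A : Type} [Primcodable A]
    (X : Set (G → A)) : Prop :=
  ∃ C : Set (PatternCoding k A), REPred (· ∈ C) ∧ X = XC S C

/-- A set is `G`-effectively closed if it is defined by a set of pattern codings which is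
recursively enumerable with oracle the word problem of `G`. -/
def GEffectivelyClosed {k : ℕ} (S : Fin k → G) {A : Type} [Primcodable A]
    (X : Set (G → A)) : Prop :=
  ∃ C : Set (PatternCoding k A), RePredIn (charFun (WP S)) (· ∈ C) ∧ X = XC S C

/-- A pattern coding is consistent if words representing the same group element receive the
same symbol. -/
def Consistent {k : ℕ} (S : Fin k → G) {A : Type} (c : PatternCoding k A) : Prop :=
  ∀ p ∈ c, ∀ q ∈ c, wordEval S p.1 = wordEval S q.1 → p.2 = q.2

/-! ### Subshifts, SFTs, sofic subshifts -/

/-- `X ⊆ A^G` is a subshift: closed (for the product of the discrete topology) and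
shift-invariant. -/
def IsSubshift {A : Type} (X : Set (G → A)) : Prop :=
  (letI : TopologicalSpace A := ⊥; IsClosed X) ∧
    ∀ x ∈ X, ∀ g : G, (fun h => x (g⁻¹ * h)) ∈ X

/-- A pattern with finite support over the alphabet `A`. -/
structure Pattern (G : Type) (A : Type) where
  supp : Finset G
  val : (g : G) → g ∈ supp → A

/-- The pattern `p` occurs in the configuration `x` at position `g`. -/
def PatternOccurs {A : Type} (p : Pattern G A) (x : G → A) (g : G) : Prop :=
  ∀ (h : G) (hh : h ∈ p.supp), x (g * h) = p.val h hh

/-- The subshift defined by a set of forbidden patterns. -/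
def XPat {A : Type} (Fs : Set (Pattern G A)) : Set (G → A) :=
  {x | ¬ ∃ (g : G) (p : Pattern G A), p ∈ Fs ∧ PatternOccurs p x g}

/-- A subshift of finite type: defined by a finite set of forbidden patterns. -/
def IsSFT {A : Type} (X : Set (G → A)) : Prop :=
  ∃ Fs : Set (Pattern G A), Fs.Finite ∧ X = XPat Fs

/-- A witness that `X` is sofic: an SFT `Y` over a finite alphabet `B` together with a factor
code (continuous shift-equivariant surjection) from `Y` onto `X`. -/
structure SoficVia (G : Type) [Group G] {A : Type} (X : Set (G → A)) : Type 1 where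
  B : Type
  finB : Fintype B
  Y : Set (G → B)
  sft : IsSFT Y
  subY : IsSubshift Y
  phi : (G → B) → (G → A)
  cont : letI : TopologicalSpace B := ⊥
         letI : TopologicalSpace A := ⊥
         ContinuousOn phi Y
  equiv : ∀ y ∈ Y, ∀ g : G, phi (fun h => y (g⁻¹ * h)) = fun h => phi y (g⁻¹ * h)
  image : phi '' Y = X

/-- A subshift is sofic if it is the image of an SFT under a factor code. -/
def IsSofic {A : Type} (X : Set (G → A)) : Prop :=
  Nonempty (SoficVia G X)

/-- A factor code from `X` onto `Y`: continuous (discrete product topologies),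
shift-equivariant and surjective. -/
def FactorCode {A B : Type} (X : Set (G → A)) (Y : Set (G → B))
    (φ : (G → A) → (G → B)) : Prop :=
  (letI : TopologicalSpace A := ⊥
   letI : TopologicalSpace B := ⊥
   ContinuousOn φ X) ∧
  (∀ x ∈ X, ∀ g : G, φ (fun h => x (g⁻¹ * h)) = fun h => φ x (g⁻¹ * h)) ∧
  φ '' X = Y

/-- Two subshifts are conjugate if there is a shift-equivariant homeomorphism between them. -/
def Conjugate {A B : Type} (X : Set (G → A)) (Y : Set (G → B)) : Prop :=
  ∃ (φ : (G → A) → (G → B)) (ψ : (G → B) → (G → A)),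
    FactorCode X Y φ ∧ FactorCode Y X ψ ∧
    (∀ x ∈ X, ψ (φ x) = x) ∧ (∀ y ∈ Y, φ (ψ y) = y)

/-- The one-or-less subshift: configurations with at most one occurrence of the symbol `1`
(represented by `true`). -/
def Xle1 (G : Type) : Set (G → Bool) :=
  {x | ∀ g h : G, x g = true → x h = true → g = h}

/-! ### `G`-machines -/

/-- A `G`-machine: finite set of states, finite tape alphabet `A` with a blank symbol, initial
state, accepting states, and a transition function moving with the generators `Fin k`. -/
structure GMachine (k : ℕ) (A : Type) : Type 1 where
  Q : Type
  finQ : Fintype Q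
  blank : A
  q0 : Q
  QF : Set Q
  delta : A × Q → A × Q × Fin k

/-- One step of a `G`-machine in the fixed head model: if `δ(x(1),q) = (a,q',s)` then the new
configuration is `σ_{s⁻¹} x̃` where `x̃` is `x` with the value at `1` replaced by `a`. -/
def GMachine.step {k : ℕ} {A : Type} (M : GMachine k A) (S : Fin k → G) :
    (G → A) × M.Q → (G → A) × M.Q :=
  fun xq =>
    let t := M.delta (xq.1 1, xq.2)
    let xt : G → A := Function.update xq.1 1 t.1
    (fun h => xt (S t.2.2 * h), t.2.1)

/-- The configuration which equals the pattern `p` on its support and `blank` elsewhere. -/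
def Pattern.config {A : Type} (p : Pattern G A) (blank : A) : G → A :=
  fun g => if h : g ∈ p.supp then p.val g h else blank

/-- The `G`-machine `M` accepts the pattern `p` if starting from the configuration `x^p` in the
initial state it eventually reaches an accepting state. -/
def GMachine.Accepts {k : ℕ} {A : Type} (M : GMachine k A) (S : Fin k → G)
    (p : Pattern G A) : Prop :=
  ∃ n : ℕ, ((M.step S)^[n] (p.config M.blank, M.q0)).2 ∈ M.QF

/-- A set of patterns is `G`-recursively enumerable if some `G`-machine accepts exactly its
elements. -/
def GRecEnum {k : ℕ} (S : Fin k → G) {A : Type} (L : Set (Pattern G A)) : Prop :=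
  ∃ M : GMachine k A, ∀ p : Pattern G A, M.Accepts S p ↔ p ∈ L

/-- The consistent pattern coding `c` defines the pattern `p`. -/
def Defines {k : ℕ} (S : Fin k → G) {A : Type} (c : PatternCoding k A)
    (p : Pattern G A) : Prop :=
  (∀ g : G, g ∈ p.supp ↔ ∃ q ∈ c, wordEval S q.1 = g) ∧
  ∀ q ∈ c, ∀ hg : wordEval S q.1 ∈ p.supp, p.val (wordEval S q.1) hg = q.2

/-- `p(C)`: the set of patterns defined by the consistent pattern codings of `C`. -/
def patternsOf {k : ℕ} (S : Fin k → G) {A : Type} (C : Set (PatternCoding k A)) :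
    Set (Pattern G A) :=
  {p | ∃ c ∈ C, Consistent S c ∧ Defines S c p}

/-- A set of patterns is closed by extensions if any pattern extending a pattern of the set
also belongs to the set. -/
def ClosedByExtensions {A : Type} (L : Set (Pattern G A)) : Prop :=
  ∀ (p₁ p₂ : Pattern G A) (hsub : p₁.supp ⊆ p₂.supp),
    (∀ (g : G) (hg : g ∈ p₁.supp), p₂.val g (hsub hg) = p₁.val g hg) →
    p₁ ∈ L → p₂ ∈ L

/-! ### Balls, ends, amenability -/

/-- The ball of radius `n` in the word metric given by `S`. -/
def ballS {k : ℕ} (S : Fin k → G) (n : ℕ) : Set G :=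
  {x | ∃ w : List (Fin k), w.length ≤ n ∧ wordEval S w = x}

/-- Adjacency in the Cayley graph restricted to the set `V`. -/
def Adj {k : ℕ} (S : Fin k → G) (V : Set G) (a b : G) : Prop :=
  a ∈ V ∧ b ∈ V ∧ ∃ i, a * S i = b

/-- Reachability inside `V` in the Cayley graph of `(G,S)`. -/
def Reach {k : ℕ} (S : Fin k → G) (V : Set G) (a b : G) : Prop :=
  Relation.ReflTransGen (Adj S V) a b

/-- `G` has at least two ends: for some `n`, the complement of the ball of radius `n` in the
Cayley graph has at least two infinite connected components. -/
def HasTwoOrMoreEnds {k : ℕ} (S : Fin k → G) : Prop :=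
  ∃ (n : ℕ) (x y : G), x ∉ ballS S n ∧ y ∉ ballS S n ∧
    {z | Reach S (ballS S n)ᶜ x z}.Infinite ∧
    {z | Reach S (ballS S n)ᶜ y z}.Infinite ∧
    ¬ Reach S (ballS S n)ᶜ x y

/-- The Følner condition: `G` is amenable. -/
def FolnerAmenable (G : Type) [Group G] : Prop :=
  ∀ (K : Finset G) (ε : ℝ), 0 < ε →
    ∃ F : Finset G, F.Nonempty ∧ ∀ k ∈ K,
      ((F \ F.image (fun x => x * k)).card : ℝ) < ε * F.card

/-! ### `G × ℤ`, presentations, hardness and the domino problems -/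

/-- Generators of `G × ℤ`: the generators of `G` paired with `0`, together with `(1,±1)`. -/
def prodGens {k : ℕ} (S : Fin k → G) : Fin (k + 2) → G × Multiplicative ℤ :=
  fun i =>
    if h : (i : ℕ) < k then (S ⟨i, h⟩, 1)
    else if (i : ℕ) = k then (1, Multiplicative.ofAdd 1)
    else (1, Multiplicative.ofAdd (-1))

/-- The element of the free group over the generator indices represented by a word. -/
def freeWord {k : ℕ} (w : List (Fin k)) : FreeGroup (Fin k) :=
  (w.map FreeGroup.of).prod

/-- `G` is recursively presented with respect to `S`: there is a recursively enumerable set of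
relators (words over the generators) whose normal closure in the free group over the
generator indices is the kernel of the evaluation map. -/
def RecursivelyPresented {k : ℕ} (S : Fin k → G) : Prop :=
  ∃ R : Set (List (Fin k)), REPred (· ∈ R) ∧
    MonoidHom.ker (FreeGroup.lift S) = Subgroup.normalClosure (freeWord '' R)

/-- `L` is hard for the class of predicates recursively enumerable in the oracle `O`
(equivalently, hard for the halting problem of machines with oracle `O`): every
such predicate many-one reduces to `L` via a computable function. -/
def OracleREHard {α : Type} [Primcodable α] (O : ℕ →. ℕ) (L : Set α) : Prop :=
  ∀ p : ℕ → Prop, RePredIn O p → ∃ f : ℕ → α, Computable f ∧ ∀ n, p n ↔ f n ∈ L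

/-- The domino problem of `(K,T)`: pairs `(N, F)` of an alphabet size and a finite list of
pattern codings over `ℕ` such that no configuration with symbols `< N` avoids `F`. -/
def DP {K : Type} [Group K] {m : ℕ} (T : Fin m → K) : Set (ℕ × List (PatternCoding m ℕ)) :=
  {q | ¬ ∃ x : K → ℕ, (∀ g, x g < q.1) ∧ x ∈ XC T {c | c ∈ q.2}}

/-- The origin constrained domino problem of `(K,T)`: triples `((N,a),F)` such that no
configuration with symbols `< N` and the symbol `a` at the origin avoids `F`. -/
def OCDP {K : Type} [Group K] {m : ℕ} (T : Fin m → K) :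
    Set ((ℕ × ℕ) × List (PatternCoding m ℕ)) :=
  {q | ¬ ∃ x : K → ℕ, (∀ g, x g < q.1.1) ∧ x 1 = q.1.2 ∧ x ∈ XC T {c | c ∈ q.2}}

/-! ### Auxiliary machinery for Statement 2 -/

set_option linter.unusedSectionVars false

variable {G : Type} [Group G]

section Staged
variable {α : Type} [Primcodable α]

theorem rePred_of_exists {g : α → ℕ → Bool} (hg : Computable₂ g) :
    REPred fun a => ∃ n, g a n = true := by
  have hf : Partrec fun a => Nat.rfind fun n => (Part.some (g a n) : Part Bool) := by
    apply Partrec.rfind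
    exact (hg.partrec₂)
  refine hf.dom_re.of_eq fun a => ?_
  refine Nat.rfind_dom.trans ?_
  constructor
  · rintro ⟨n, hn, -⟩
    exact ⟨n, (Part.mem_some_iff.1 hn).symm⟩
  · rintro ⟨n, hn⟩
    exact ⟨n, by simp [hn], fun {m} _ => trivial⟩

theorem staged_of_rePred {p : α → Prop} (hp : REPred p) :
    ∃ g : α → ℕ → Bool, Primrec₂ g ∧ (∀ a m n, m ≤ n → g a m = true → g a n = true) ∧
      ∀ a, p a ↔ ∃ n, g a n = true := by
  obtain ⟨cd, hcd⟩ := Nat.Partrec.Code.exists_code.1 hp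
  refine ⟨fun a n => (Nat.Partrec.Code.evaln n cd (Encodable.encode a)).isSome, ?_, ?_, ?_⟩
  · exact Primrec.option_isSome.comp
      (Nat.Partrec.Code.primrec_evaln.comp
        (((Primrec.snd).pair (Primrec.const cd)).pair (Primrec.encode.comp Primrec.fst)))
  · intro a m n hmn h
    obtain ⟨x, hx⟩ := Option.isSome_iff_exists.1 h
    exact Option.isSome_iff_exists.2 ⟨x, Nat.Partrec.Code.evaln_mono hmn hx⟩
  · intro a
    have h1 : p a ↔ (Nat.Partrec.Code.eval cd (Encodable.encode a)).Dom := by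
      rw [hcd]
      simp only [Encodable.encodek, Part.coe_some, Part.bind_eq_bind, Part.bind_some,
        Part.map_Dom]
      exact ⟨fun h => ⟨h, trivial⟩, fun h => h.1⟩
    rw [h1, Part.dom_iff_mem]
    constructor
    · rintro ⟨x, hx⟩
      obtain ⟨kk, hk⟩ := Nat.Partrec.Code.evaln_complete.1 hx
      exact ⟨kk, Option.isSome_iff_exists.2 ⟨x, hk⟩⟩
    · rintro ⟨n, hn⟩
      obtain ⟨x, hx⟩ := Option.isSome_iff_exists.1 hn
      exact ⟨x, Nat.Partrec.Code.evaln_complete.2 ⟨n, hx⟩⟩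

end Staged

theorem wordEval_nil {k : ℕ} (S : Fin k → G) : wordEval S [] = 1 := rfl

theorem wordEval_cons {k : ℕ} (S : Fin k → G) (i : Fin k) (w : List (Fin k)) :
    wordEval S (i :: w) = S i * wordEval S w := by simp [wordEval]

theorem wordEval_append {k : ℕ} (S : Fin k → G) (w v : List (Fin k)) :
    wordEval S (w ++ v) = wordEval S w * wordEval S v := by simp [wordEval]

theorem wordEval_winv {k : ℕ} (S : Fin k → G) {j : Fin k → Fin k}
    (hj : ∀ i, S (j i) = (S i)⁻¹) (w : List (Fin k)) :
    wordEval S ((w.map j).reverse) = (wordEval S w)⁻¹ := by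
  induction w with
  | nil => simp [wordEval]
  | cons i w ih =>
    rw [List.map_cons, List.reverse_cons, wordEval_append, ih, wordEval_cons, wordEval_cons,
      wordEval_nil, hj, mul_inv_rev, mul_one]

theorem exists_word {k : ℕ} {S : Fin k → G} (hS : IsGenData S) (g : G) :
    ∃ w, wordEval S w = g := by
  obtain ⟨j, hj⟩ : ∃ j : Fin k → Fin k, ∀ i, S (j i) = (S i)⁻¹ :=
    ⟨fun i => (hS.2.1 i).choose, fun i => (hS.2.1 i).choose_spec⟩
  let H : Subgroup G :=
    { carrier := Set.range (wordEval S)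
      one_mem' := ⟨[], rfl⟩
      mul_mem' := by
        rintro a b ⟨w, rfl⟩ ⟨v, rfl⟩
        exact ⟨w ++ v, wordEval_append S w v⟩
      inv_mem' := by
        rintro a ⟨w, rfl⟩
        exact ⟨(w.map j).reverse, wordEval_winv S hj w⟩ }
  have hle : Subgroup.closure (Set.range S) ≤ H := by
    rw [Subgroup.closure_le]
    rintro a ⟨i, rfl⟩
    exact ⟨[i], by simp [wordEval]⟩
  exact hle (hS.2.2 ▸ Subgroup.mem_top g : g ∈ Subgroup.closure (Set.range S))

/-! ### Certificates -/

section Cert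

variable {k : ℕ} {A : Type} [Fintype A] [Primcodable A]

instance (priority := 10) instDEA (A : Type) [Primcodable A] : DecidableEq A :=
  Encodable.decidableEqOfEncodable A

/-- Index of a word in a list of words, with a pinned `BEq` instance. -/
def idxOf {k : ℕ} (w : List (Fin k)) (W : List (List (Fin k))) : ℕ :=
  @List.idxOf _ instBEqOfDecidableEq w W

theorem idxOf_lt_length {k : ℕ} {w : List (Fin k)} {W : List (List (Fin k))} :
    idxOf w W < W.length ↔ w ∈ W := by
  unfold idxOf
  letI : BEq (List (Fin k)) := instBEqOfDecidableEq
  exact List.idxOf_lt_length_iff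

theorem idxOf_get? {k : ℕ} {w : List (Fin k)} {W : List (List (Fin k))} (h : w ∈ W) :
    W[idxOf w W]? = some w :=
  (List.getElem?_eq_getElem (idxOf_lt_length.2 h)).trans
    (congrArg some (by
      letI : BEq (List (Fin k)) := instBEqOfDecidableEq
      exact List.getElem_idxOf (idxOf_lt_length.2 h)))

def listA (A : Type) [Fintype A] : List A := Finset.univ.toList

theorem mem_listA (a : A) : a ∈ listA A := by
  simp [listA]

def vecs (A : Type) [Fintype A] : ℕ → List (List A) :=
  fun n => n.rec [[]] fun _ ih => (ih.map fun v => (listA A).map fun a => a :: v).flatten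

theorem mem_vecs {v : List A} {n : ℕ} : v ∈ vecs A n ↔ v.length = n := by
  induction n generalizing v with
  | zero =>
    show v ∈ [([] : List A)] ↔ _
    simp only [List.mem_singleton, List.length_eq_zero_iff]
  | succ n ih =>
    show v ∈ (((vecs A n).map fun v => (listA A).map fun a => a :: v).flatten) ↔ _
    rw [List.mem_flatten]
    constructor
    · rintro ⟨l, hl, hv⟩
      obtain ⟨w, hw, rfl⟩ := List.mem_map.1 hl
      obtain ⟨a, -, rfl⟩ := List.mem_map.1 hv
      simp [ih.1 hw]
    · intro hv
      match v, hv with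
      | a :: w, hv =>
        refine ⟨(listA A).map fun b => b :: w, List.mem_map.2 ⟨w, ih.2 ?_, rfl⟩,
          List.mem_map.2 ⟨a, mem_listA a, rfl⟩⟩
        simpa using hv

def wordsOf (c : PatternCoding k A) (L : List (List (Fin k) × PatternCoding k A)) :
    List (List (Fin k)) :=
  [] :: (c.map Prod.fst ++ (L.map fun e => e.2.map fun q => e.1 ++ q.1).flatten)

theorem mem_wordsOf_left {c : PatternCoding k A} {L} {p} (hp : p ∈ c) :
    p.1 ∈ wordsOf c L := by
  simp only [wordsOf, List.mem_cons, List.mem_append, List.mem_map]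
  exact Or.inr (Or.inl ⟨p, hp, rfl⟩)

theorem mem_wordsOf_right {c : PatternCoding k A} {L} {e} (he : e ∈ L) {q} (hq : q ∈ e.2) :
    e.1 ++ q.1 ∈ wordsOf c L := by
  simp only [wordsOf, List.mem_cons, List.mem_append, List.mem_flatten, List.mem_map]
  exact Or.inr (Or.inr ⟨e.2.map fun q => e.1 ++ q.1, ⟨e, he, rfl⟩, List.mem_map.2 ⟨q, hq, rfl⟩⟩)

def lk (W : List (List (Fin k))) (v : List A) (w : List (Fin k)) : Option A :=
  v[idxOf w W]?

def Dbool (c : PatternCoding k A) (L : List (List (Fin k) × PatternCoding k A))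
    (EL : List (List (Fin k) × List (Fin k))) : Bool :=
  (vecs A (wordsOf c L).length).all fun v =>
    !(c.all fun p => decide (lk (wordsOf c L) v p.1 = some p.2))
    || (EL.any fun e => decide (idxOf e.1 (wordsOf c L) < (wordsOf c L).length)
         && decide (idxOf e.2 (wordsOf c L) < (wordsOf c L).length)
         && !decide (lk (wordsOf c L) v e.1 = lk (wordsOf c L) v e.2))
    || (L.any fun e => e.2.all fun q => decide (lk (wordsOf c L) v (e.1 ++ q.1) = some q.2))


theorem cert_iff {k : ℕ} {S : Fin k → G} (hS : IsGenData S)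
    {j : Fin k → Fin k} (hj : ∀ i, S (j i) = (S i)⁻¹)
    (C : Set (PatternCoding k A)) (X : Set (G → A)) (hXC : X = XC S C)
    (c : PatternCoding k A) :
    (¬ ∃ x ∈ X, ∀ p ∈ c, x (wordEval S p.1) = p.2) ↔
      ∃ (L : List (List (Fin k) × PatternCoding k A))
        (EL : List (List (Fin k) × List (Fin k))),
        (∀ e ∈ L, e.2 ∈ C) ∧ (∀ e ∈ EL, wordEval S (e.1 ++ (e.2.map j).reverse) = 1) ∧
        Dbool c L EL = true := by
  constructor
  · -- emptiness implies certificate, by compactness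
    intro h
    letI : TopologicalSpace A := ⊥
    haveI : DiscreteTopology A := ⟨rfl⟩
    have hKclosed : IsClosed {x : G → A | ∀ p ∈ c, x (wordEval S p.1) = p.2} := by
      have hrw : {x : G → A | ∀ p ∈ c, x (wordEval S p.1) = p.2}
          = ⋂ p ∈ c.toFinset, {x : G → A | x (wordEval S p.1) = p.2} := by
        ext x; simp [List.mem_toFinset]
      rw [hrw]
      refine isClosed_biInter fun p _ => ?_
      rw [show {x : G → A | x (wordEval S p.1) = p.2}
          = (fun x : G → A => x (wordEval S p.1)) ⁻¹' {p.2} from rfl]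
      exact IsClosed.preimage (continuous_apply _) (isClosed_discrete _)
    have hKcomp : IsCompact {x : G → A | ∀ p ∈ c, x (wordEval S p.1) = p.2} :=
      hKclosed.isCompact
    have hUopen : ∀ e : {e : G × PatternCoding k A // e.2 ∈ C},
        IsOpen {x : G → A | ∀ q ∈ e.1.2, x (e.1.1 * wordEval S q.1) = q.2} := by
      intro e
      have hrw : {x : G → A | ∀ q ∈ e.1.2, x (e.1.1 * wordEval S q.1) = q.2}
          = ⋂ q ∈ (e.1.2).toFinset, {x : G → A | x (e.1.1 * wordEval S q.1) = q.2} := by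
        ext x; simp [List.mem_toFinset]
      rw [hrw]
      refine isOpen_biInter_finset fun q _ => ?_
      rw [show {x : G → A | x (e.1.1 * wordEval S q.1) = q.2}
          = (fun x : G → A => x (e.1.1 * wordEval S q.1)) ⁻¹' {q.2} from rfl]
      exact IsOpen.preimage (continuous_apply _) (isOpen_discrete _)
    have hcover : {x : G → A | ∀ p ∈ c, x (wordEval S p.1) = p.2} ⊆
        ⋃ e : {e : G × PatternCoding k A // e.2 ∈ C},
          {x : G → A | ∀ q ∈ e.1.2, x (e.1.1 * wordEval S q.1) = q.2} := by
      intro x hx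
      have hxX : x ∉ X := fun hxX => h ⟨x, hxX, hx⟩
      rw [hXC] at hxX
      simp only [XC, Set.mem_setOf_eq, not_not] at hxX
      obtain ⟨g, d, hdC, hocc⟩ := hxX
      exact Set.mem_iUnion.2 ⟨⟨(g, d), hdC⟩, hocc⟩
    obtain ⟨t, ht⟩ := hKcomp.elim_finite_subcover _ hUopen hcover
    have hword : ∀ g : G, ∃ w, wordEval S w = g := exists_word hS
    set L : List (List (Fin k) × PatternCoding k A) :=
      t.toList.map fun e => ((hword e.1.1).choose, e.1.2) with hL
    set EL : List (List (Fin k) × List (Fin k)) :=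
      ((wordsOf c L) ×ˢ (wordsOf c L)).filter
        fun e => decide (wordEval S e.1 = wordEval S e.2) with hEL
    refine ⟨L, EL, ?_, ?_, ?_⟩
    · intro e he
      rw [hL] at he
      obtain ⟨i, hi, rfl⟩ := List.mem_map.1 he
      exact i.2
    · intro e he
      rw [hEL] at he
      have hf := List.mem_filter.1 he
      have heq : wordEval S e.1 = wordEval S e.2 := of_decide_eq_true hf.2
      rw [wordEval_append, wordEval_winv S hj, heq, mul_inv_cancel]
    · unfold Dbool
      rw [List.all_eq_true]
      intro v hv
      by_cases hsat : (c.all fun p => decide (lk (wordsOf c L) v p.1 = some p.2)) = true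
      · by_cases helb : (EL.any fun e =>
            decide (idxOf e.1 (wordsOf c L) < (wordsOf c L).length)
            && decide (idxOf e.2 (wordsOf c L) < (wordsOf c L).length)
            && !decide (lk (wordsOf c L) v e.1 = lk (wordsOf c L) v e.2)) = true
        · simp [helb]
        · -- build the configuration x and use the finite subcover
          have hvlen : v.length = (wordsOf c L).length := mem_vecs.1 hv
          have hvne : v ≠ [] := by
            intro hnil
            rw [hnil] at hvlen
            simp [wordsOf] at hvlen
          letI : Inhabited A := ⟨v.head hvne⟩
          have hsat' : ∀ p ∈ c, lk (wordsOf c L) v p.1 = some p.2 := fun p hp =>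
            of_decide_eq_true (List.all_eq_true.1 hsat p hp)
          have helb' : ∀ e ∈ EL, e.1 ∈ wordsOf c L → e.2 ∈ wordsOf c L →
              lk (wordsOf c L) v e.1 = lk (wordsOf c L) v e.2 := by
            intro e he h1 h2
            by_contra hne
            apply helb
            rw [List.any_eq_true]
            refine ⟨e, he, ?_⟩
            rw [Bool.and_eq_true, Bool.and_eq_true]
            exact ⟨⟨decide_eq_true (idxOf_lt_length.2 h1),
              decide_eq_true (idxOf_lt_length.2 h2)⟩, by simp [hne]⟩
          set x : G → A := fun g =>
            if hg : ∃ w, w ∈ wordsOf c L ∧ wordEval S w = g then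
              (lk (wordsOf c L) v hg.choose).getD default
            else default with hx
          have lookx : ∀ w ∈ wordsOf c L,
              x (wordEval S w) = (lk (wordsOf c L) v w).getD default := by
            intro w hw
            have hg : ∃ u, u ∈ wordsOf c L ∧ wordEval S u = wordEval S w := ⟨w, hw, rfl⟩
            simp only [hx]
            rw [dif_pos hg]
            have hch := hg.choose_spec
            have hmemEL : (hg.choose, w) ∈ EL := by
              rw [hEL, List.mem_filter]
              exact ⟨List.mem_product.2 ⟨hch.1, hw⟩, decide_eq_true hch.2⟩
            rw [show lk (wordsOf c L) v hg.choose = lk (wordsOf c L) v w from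
              helb' (hg.choose, w) hmemEL hch.1 hw]
          have hxK : x ∈ {x : G → A | ∀ p ∈ c, x (wordEval S p.1) = p.2} := by
            intro p hp
            rw [lookx p.1 (mem_wordsOf_left hp), hsat' p hp]
            rfl
          have hxU := ht hxK
          simp only [Set.mem_iUnion, exists_prop] at hxU
          obtain ⟨i, hit, hxUi⟩ := hxU
          have hiL : ((hword i.1.1).choose, i.1.2) ∈ L := by
            rw [hL]
            exact List.mem_map.2 ⟨i, Finset.mem_toList.2 hit, rfl⟩
          have hlast : (L.any fun e => e.2.all fun q =>
              decide (lk (wordsOf c L) v (e.1 ++ q.1) = some q.2)) = true := by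
            rw [List.any_eq_true]
            refine ⟨((hword i.1.1).choose, i.1.2), hiL, ?_⟩
            rw [List.all_eq_true]
            intro q hq
            apply decide_eq_true
            have hmem : (hword i.1.1).choose ++ q.1 ∈ wordsOf c L :=
              mem_wordsOf_right hiL hq
            have h1 : x (wordEval S ((hword i.1.1).choose ++ q.1)) = q.2 := by
              rw [wordEval_append, (hword i.1.1).choose_spec]
              exact hxUi q hq
            have h2 := lookx _ hmem
            obtain ⟨b, hb⟩ : ∃ b, lk (wordsOf c L) v ((hword i.1.1).choose ++ q.1) = some b :=
              ⟨_, List.getElem?_eq_getElem (by rw [hvlen]; exact idxOf_lt_length.2 hmem)⟩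
            rw [hb]
            have hbq : b = q.2 := by
              rw [← h1, h2, hb]
              rfl
            rw [hbq]
          simp [hlast]
      · simp [Bool.not_eq_true] at hsat
        simp [hsat]
  · -- certificate implies emptiness
    rintro ⟨L, EL, hLC, hEL, hD⟩ ⟨x, hxX, hsat⟩
    have hWv : ∀ w ∈ wordsOf c L,
        lk (wordsOf c L) ((wordsOf c L).map fun u => x (wordEval S u)) w
          = some (x (wordEval S w)) := by
      intro w hw
      show ((wordsOf c L).map fun u => x (wordEval S u))[idxOf w (wordsOf c L)]? = _
      rw [List.getElem?_map, idxOf_get? hw]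
      rfl
    set v := (wordsOf c L).map fun u => x (wordEval S u) with hv
    have hvmem : v ∈ vecs A (wordsOf c L).length := mem_vecs.2 (by rw [hv, List.length_map])
    have hDb := List.all_eq_true.1 hD v hvmem
    simp only [Bool.or_eq_true] at hDb
    have hsatB : (c.all fun p => decide (lk (wordsOf c L) v p.1 = some p.2)) = true := by
      rw [List.all_eq_true]
      intro p hp
      apply decide_eq_true
      rw [hWv p.1 (mem_wordsOf_left hp), hsat p hp]
    rcases hDb with (h1 | h2) | h3
    · rw [Bool.not_eq_true'] at h1
      rw [h1] at hsatB
      cases hsatB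
    · obtain ⟨e, heEL, hee⟩ := List.any_eq_true.1 h2
      rw [Bool.and_eq_true, Bool.and_eq_true] at hee
      obtain ⟨⟨hm1, hm2⟩, hne⟩ := hee
      have hw1 : e.1 ∈ wordsOf c L := idxOf_lt_length.1 (of_decide_eq_true hm1)
      have hw2 : e.2 ∈ wordsOf c L := idxOf_lt_length.1 (of_decide_eq_true hm2)
      have heq : wordEval S e.1 = wordEval S e.2 := by
        have h0 := hEL e heEL
        rw [wordEval_append, wordEval_winv S hj] at h0
        exact mul_inv_eq_one.1 h0
      rw [Bool.not_eq_true', decide_eq_false_iff_not] at hne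
      exact hne (by rw [hWv _ hw1, hWv _ hw2, heq])
    · obtain ⟨e, heL, hee⟩ := List.any_eq_true.1 h3
      have hocc : ∀ q ∈ e.2, x (wordEval S e.1 * wordEval S q.1) = q.2 := by
        intro q hq
        have h0 := of_decide_eq_true (List.all_eq_true.1 hee q hq)
        rw [hWv _ (mem_wordsOf_right heL hq)] at h0
        have h1 := Option.some.inj h0
        rwa [wordEval_append] at h1
      rw [hXC] at hxX
      exact hxX ⟨wordEval S e.1, e.2, hLC e heL, hocc⟩


/-! ### Computability of the certificate checker -/

abbrev TRIP (k : ℕ) (A : Type) : Type :=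
  PatternCoding k A ×
    List (List (Fin k) × PatternCoding k A) × List (List (Fin k) × List (Fin k))

end Cert

section Prim

variable {k : ℕ} {A : Type} [Fintype A] [Primcodable A]

private theorem all_foldr {α : Type} (l : List α) (p : α → Bool) :
    l.all p = l.foldr (fun b r => p b && r) true := by
  induction l with
  | nil => rfl
  | cons a l ih => simp [List.all_cons, ih]

private theorem any_foldr {α : Type} (l : List α) (p : α → Bool) :
    l.any p = l.foldr (fun b r => p b || r) false := by
  induction l with
  | nil => rfl
  | cons a l ih => simp [List.any_cons, ih]

theorem primrec_list_all {α β : Type} [Primcodable α] [Primcodable β]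
    {f : α → List β} {g : α → β → Bool} (hf : Primrec f) (hg : Primrec₂ g) :
    Primrec fun a => (f a).all (g a) := by
  have hG : Primrec₂ (fun (a : α) (p : β × Bool) => g a p.1 && p.2) :=
    (Primrec.cond (hg.comp Primrec.fst (Primrec.fst.comp Primrec.snd))
      (Primrec.snd.comp Primrec.snd) (Primrec.const false)).to₂.of_eq fun a p => by
        cases g a p.1 <;> simp
  have h := Primrec.list_foldr hf (Primrec.const true) hG
  exact h.of_eq fun a => by simp [all_foldr]

theorem primrec_list_any {α β : Type} [Primcodable α] [Primcodable β]
    {f : α → List β} {g : α → β → Bool} (hf : Primrec f) (hg : Primrec₂ g) :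
    Primrec fun a => (f a).any (g a) := by
  have hG : Primrec₂ (fun (a : α) (p : β × Bool) => g a p.1 || p.2) :=
    (Primrec.cond (hg.comp Primrec.fst (Primrec.fst.comp Primrec.snd))
      (Primrec.const true) (Primrec.snd.comp Primrec.snd)).to₂.of_eq fun a p => by
        cases g a p.1 <;> simp
  have h := Primrec.list_foldr hf (Primrec.const false) hG
  exact h.of_eq fun a => by simp [any_foldr]

theorem primrec_wordsOf :
    Primrec₂ (fun (c : PatternCoding k A) (L : List (List (Fin k) × PatternCoding k A)) =>
      wordsOf c L) := by
  have h1 : Primrec fun p : PatternCoding k A × List (List (Fin k) × PatternCoding k A) =>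
      p.1.map Prod.fst :=
    Primrec.list_map Primrec.fst (Primrec.fst.comp Primrec.snd).to₂
  have hg3 : Primrec₂ fun
      (r : (PatternCoding k A × List (List (Fin k) × PatternCoding k A)) ×
        (List (Fin k) × PatternCoding k A)) (q : List (Fin k) × A) => r.2.1 ++ q.1 :=
    (Primrec.list_append.comp (Primrec.fst.comp (Primrec.snd.comp Primrec.fst))
      (Primrec.fst.comp Primrec.snd)).to₂
  have h2 : Primrec fun p : PatternCoding k A × List (List (Fin k) × PatternCoding k A) =>
      p.2.map fun e => e.2.map fun q => e.1 ++ q.1 :=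
    Primrec.list_map Primrec.snd
      (Primrec.list_map (Primrec.snd.comp Primrec.snd) hg3).to₂
  exact (Primrec.list_cons.comp (Primrec.const [])
    (Primrec.list_append.comp h1 (Primrec.list_flatten.comp h2))).to₂

theorem primrec_idxOf : Primrec₂ (fun (w : List (Fin k)) (W : List (List (Fin k))) =>
    idxOf w W) :=
  Primrec.list_idxOf

theorem primrec_lk {σ : Type} [Primcodable σ] {fW : σ → List (List (Fin k))}
    {fv : σ → List A} {fw : σ → List (Fin k)}
    (hfW : Primrec fW) (hfv : Primrec fv) (hfw : Primrec fw) :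
    Primrec fun s => lk (fW s) (fv s) (fw s) :=
  Primrec.list_getElem?.comp hfv (primrec_idxOf.comp hfw hfW)

theorem primrec_vecs : Primrec (vecs A) := by
  have hcons : Primrec₂ fun (q : (ℕ × List (List A)) × List A) (a : A) => a :: q.2 :=
    (Primrec.list_cons.comp Primrec.snd (Primrec.snd.comp Primrec.fst)).to₂
  have hbody : Primrec₂ fun (p : ℕ × List (List A)) (v : List A) =>
      (listA A).map fun a => a :: v :=
    (Primrec.list_map (Primrec.const (listA A)) hcons).to₂
  have hf : Primrec₂ fun (_ : ℕ) (ih : List (List A)) =>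
      (ih.map fun v => (listA A).map fun a => a :: v).flatten :=
    (Primrec.list_flatten.comp (Primrec.list_map Primrec.snd hbody)).to₂
  exact (Primrec.nat_rec₁ [[]] hf).of_eq fun n => rfl

set_option maxHeartbeats 2000000 in
theorem primrec_Dbool :
    Primrec fun p : TRIP k A => Dbool p.1 p.2.1 p.2.2 := by
  have hW : Primrec fun p : TRIP k A => wordsOf p.1 p.2.1 :=
    primrec_wordsOf.comp Primrec.fst (Primrec.fst.comp Primrec.snd)
  apply primrec_list_all (primrec_vecs.comp (Primrec.list_length.comp hW))
  have hsat : Primrec fun s : TRIP k A × List A =>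
      s.1.1.all fun q => decide (lk (wordsOf s.1.1 s.1.2.1) s.2 q.1 = some q.2) := by
    apply primrec_list_all (Primrec.fst.comp Primrec.fst)
    exact (Primrec.eq.comp
      (primrec_lk (hW.comp (Primrec.fst.comp Primrec.fst)) (Primrec.snd.comp Primrec.fst)
        (Primrec.fst.comp Primrec.snd))
      (Primrec.option_some.comp (Primrec.snd.comp Primrec.snd))).decide.to₂
  have helb : Primrec fun s : TRIP k A × List A =>
      s.1.2.2.any fun e =>
        decide (idxOf e.1 (wordsOf s.1.1 s.1.2.1) < (wordsOf s.1.1 s.1.2.1).length)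
        && decide (idxOf e.2 (wordsOf s.1.1 s.1.2.1) < (wordsOf s.1.1 s.1.2.1).length)
        && !decide (lk (wordsOf s.1.1 s.1.2.1) s.2 e.1 = lk (wordsOf s.1.1 s.1.2.1) s.2 e.2) := by
    apply primrec_list_any (Primrec.snd.comp (Primrec.snd.comp Primrec.fst))
    have hWs : Primrec fun r : (TRIP k A × List A) × List (Fin k) × List (Fin k) =>
        wordsOf r.1.1.1 r.1.1.2.1 := hW.comp (Primrec.fst.comp Primrec.fst)
    have hd1 : Primrec fun r : (TRIP k A × List A) × List (Fin k) × List (Fin k) =>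
        decide (idxOf r.2.1 (wordsOf r.1.1.1 r.1.1.2.1) < (wordsOf r.1.1.1 r.1.1.2.1).length) :=
      Primrec.nat_lt.comp (primrec_idxOf.comp (Primrec.fst.comp Primrec.snd) hWs)
        (Primrec.list_length.comp hWs) |>.decide
    have hd2 : Primrec fun r : (TRIP k A × List A) × List (Fin k) × List (Fin k) =>
        decide (idxOf r.2.2 (wordsOf r.1.1.1 r.1.1.2.1) < (wordsOf r.1.1.1 r.1.1.2.1).length) :=
      Primrec.nat_lt.comp (primrec_idxOf.comp (Primrec.snd.comp Primrec.snd) hWs)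
        (Primrec.list_length.comp hWs) |>.decide
    have hd3 : Primrec fun r : (TRIP k A × List A) × List (Fin k) × List (Fin k) =>
        !decide (lk (wordsOf r.1.1.1 r.1.1.2.1) r.1.2 r.2.1
          = lk (wordsOf r.1.1.1 r.1.1.2.1) r.1.2 r.2.2) :=
      Primrec.not.comp (Primrec.eq.comp
        (primrec_lk hWs (Primrec.snd.comp Primrec.fst)
          (Primrec.fst.comp Primrec.snd))
        (primrec_lk hWs (Primrec.snd.comp Primrec.fst)
          (Primrec.snd.comp Primrec.snd)) |>.decide)
    exact (Primrec.and.comp (Primrec.and.comp hd1 hd2) hd3).to₂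
  have hlb : Primrec fun s : TRIP k A × List A =>
      s.1.2.1.any fun e => e.2.all fun q =>
        decide (lk (wordsOf s.1.1 s.1.2.1) s.2 (e.1 ++ q.1) = some q.2) := by
    have hproj : Primrec fun r :
        ((TRIP k A × List A) × List (Fin k) × PatternCoding k A) × List (Fin k) × A =>
        r.1.1 :=
      Primrec.fst.comp Primrec.fst
    have hWr : Primrec fun r :
        ((TRIP k A × List A) × List (Fin k) × PatternCoding k A) × List (Fin k) × A =>
        wordsOf r.1.1.1.1 r.1.1.1.2.1 :=
      hW.comp (Primrec.fst.comp hproj)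
    have hinner : Primrec₂ fun (r : (TRIP k A × List A) × List (Fin k) × PatternCoding k A)
        (q : List (Fin k) × A) =>
        decide (lk (wordsOf r.1.1.1 r.1.1.2.1) r.1.2 (r.2.1 ++ q.1) = some q.2) :=
      (Primrec.eq.comp
        (primrec_lk hWr (Primrec.snd.comp hproj)
          (Primrec.list_append.comp (Primrec.fst.comp (Primrec.snd.comp Primrec.fst))
            (Primrec.fst.comp Primrec.snd)))
        (Primrec.option_some.comp (Primrec.snd.comp Primrec.snd))).decide.to₂
    have hmid : Primrec₂ fun (s : TRIP k A × List A) (e : List (Fin k) × PatternCoding k A) =>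
        e.2.all fun q => decide (lk (wordsOf s.1.1 s.1.2.1) s.2 (e.1 ++ q.1) = some q.2) :=
      (primrec_list_all (Primrec.snd.comp Primrec.snd) hinner).to₂
    exact primrec_list_any (Primrec.fst.comp (Primrec.snd.comp Primrec.fst)) hmid
  exact (Primrec.or.comp (Primrec.or.comp (Primrec.not.comp hsat) helb) hlb).to₂

end Prim

/-! ### Assembling the enumeration -/

section Assemble

variable {k : ℕ} {A : Type} [Fintype A] [Primcodable A]

private theorem exists_stage {β : Type} (g : β → ℕ → Bool)
    (mono : ∀ b, ∀ m n, m ≤ n → g b m = true → g b n = true) (l : List β)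
    (h : ∀ b ∈ l, ∃ n, g b n = true) : ∃ N, ∀ b ∈ l, g b N = true := by
  induction l with
  | nil => exact ⟨0, by simp⟩
  | cons b l ih =>
    obtain ⟨N, hN⟩ := ih fun b' hb' => h b' (List.mem_cons_of_mem _ hb')
    obtain ⟨n, hn⟩ := h b (List.mem_cons_self)
    refine ⟨max n N, fun b' hb' => ?_⟩
    rcases List.mem_cons.1 hb' with rfl | hb'
    · exact mono _ _ _ (le_max_left _ _) hn
    · exact mono _ _ _ (le_max_right _ _) (hN b' hb')

/-- The staged enumeration function for the maximal set of codings. -/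
def Phi (gC : PatternCoding k A → ℕ → Bool) (gW : List (Fin k) → ℕ → Bool)
    (j : Fin k → Fin k) (c : PatternCoding k A) (n : ℕ) : Bool :=
  (List.range n).any fun m =>
    (Encodable.decode (α := List (List (Fin k) × PatternCoding k A) ×
        List (List (Fin k) × List (Fin k))) m).elim false fun LE =>
      ((LE.1.all fun e => gC e.2 n)
        && (LE.2.all fun e => gW (e.1 ++ (e.2.map j).reverse) n))
        && Dbool c LE.1 LE.2

set_option maxHeartbeats 2000000 in
theorem primrec_Phi {gC : PatternCoding k A → ℕ → Bool} {gW : List (Fin k) → ℕ → Bool}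
    (hgC : Primrec₂ gC) (hgW : Primrec₂ gW) (j : Fin k → Fin k) :
    Primrec₂ (Phi gC gW j) := by
  have hdec : Primrec fun r : (PatternCoding k A × ℕ) × ℕ =>
      (Encodable.decode (α := List (List (Fin k) × PatternCoding k A) ×
        List (List (Fin k) × List (Fin k))) r.2) :=
    Primrec.decode.comp Primrec.snd
  have ha1 : Primrec fun ρ : ((PatternCoding k A × ℕ) × ℕ) ×
      (List (List (Fin k) × PatternCoding k A) × List (List (Fin k) × List (Fin k))) =>
      ρ.2.1.all fun e => gC e.2 ρ.1.1.2 := by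
    apply primrec_list_all (Primrec.fst.comp Primrec.snd)
    exact (hgC.comp (Primrec.snd.comp Primrec.snd)
      (Primrec.snd.comp (Primrec.fst.comp (Primrec.fst.comp Primrec.fst)))).to₂
  have ha2 : Primrec fun ρ : ((PatternCoding k A × ℕ) × ℕ) ×
      (List (List (Fin k) × PatternCoding k A) × List (List (Fin k) × List (Fin k))) =>
      ρ.2.2.all fun e => gW (e.1 ++ (e.2.map j).reverse) ρ.1.1.2 := by
    apply primrec_list_all (Primrec.snd.comp Primrec.snd)
    have hword : Primrec fun r : (((PatternCoding k A × ℕ) × ℕ) ×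
        (List (List (Fin k) × PatternCoding k A) × List (List (Fin k) × List (Fin k)))) ×
        (List (Fin k) × List (Fin k)) => r.2.1 ++ (r.2.2.map j).reverse :=
      Primrec.list_append.comp (Primrec.fst.comp Primrec.snd)
        (Primrec.list_reverse.comp (Primrec.list_map (Primrec.snd.comp Primrec.snd)
          ((Primrec.dom_finite j).comp Primrec.snd).to₂))
    exact (hgW.comp hword
      (Primrec.snd.comp (Primrec.fst.comp (Primrec.fst.comp Primrec.fst)))).to₂
  have ha3 : Primrec fun ρ : ((PatternCoding k A × ℕ) × ℕ) ×
      (List (List (Fin k) × PatternCoding k A) × List (List (Fin k) × List (Fin k))) =>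
      Dbool ρ.1.1.1 ρ.2.1 ρ.2.2 :=
    primrec_Dbool.comp
      ((Primrec.fst.comp (Primrec.fst.comp Primrec.fst)).pair Primrec.snd)
  have hsome : Primrec₂ fun (r : (PatternCoding k A × ℕ) × ℕ)
      (LE : List (List (Fin k) × PatternCoding k A) × List (List (Fin k) × List (Fin k))) =>
      ((LE.1.all fun e => gC e.2 r.1.2)
        && (LE.2.all fun e => gW (e.1 ++ (e.2.map j).reverse) r.1.2))
        && Dbool r.1.1 LE.1 LE.2 :=
    (Primrec.and.comp (Primrec.and.comp ha1 ha2) ha3).to₂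
  have hin : Primrec₂ fun (r : PatternCoding k A × ℕ) (m : ℕ) =>
      (Encodable.decode (α := List (List (Fin k) × PatternCoding k A) ×
        List (List (Fin k) × List (Fin k))) m).elim false fun LE =>
      ((LE.1.all fun e => gC e.2 r.2)
        && (LE.2.all fun e => gW (e.1 ++ (e.2.map j).reverse) r.2))
        && Dbool r.1 LE.1 LE.2 := by
    have := Primrec.option_casesOn hdec (Primrec.const false) hsome
    exact this.to₂.of_eq fun r m => by
      rcases Encodable.decode m with _ | LE <;> rfl
  exact (primrec_list_any (Primrec.list_range.comp Primrec.snd) hin).to₂.of_eq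
    fun c n => rfl

end Assemble

section Final

variable {k : ℕ} {A : Type} [Fintype A] [Primcodable A]

theorem Phi_iff {S : Fin k → G} (hS : IsGenData S) {j : Fin k → Fin k}
    (hj : ∀ i, S (j i) = (S i)⁻¹)
    (C : Set (PatternCoding k A)) (X : Set (G → A)) (hXC : X = XC S C)
    {gC : PatternCoding k A → ℕ → Bool} {gW : List (Fin k) → ℕ → Bool}
    (hgCmono : ∀ a, ∀ m n, m ≤ n → gC a m = true → gC a n = true)
    (hgCspec : ∀ b, b ∈ C ↔ ∃ n, gC b n = true)
    (hgWmono : ∀ a, ∀ m n, m ≤ n → gW a m = true → gW a n = true)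
    (hgWspec : ∀ w, w ∈ WP S ↔ ∃ n, gW w n = true)
    (c : PatternCoding k A) :
    (¬ ∃ x ∈ X, ∀ p ∈ c, x (wordEval S p.1) = p.2) ↔ ∃ n, Phi gC gW j c n = true := by
  rw [cert_iff hS hj C X hXC c]
  constructor
  · rintro ⟨L, EL, hLC, hEL, hD⟩
    obtain ⟨N1, hN1⟩ := exists_stage (fun (e : List (Fin k) × PatternCoding k A) n => gC e.2 n)
      (fun b m n h => hgCmono b.2 m n h) L (fun e he => (hgCspec e.2).1 (hLC e he))
    obtain ⟨N2, hN2⟩ := exists_stage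
      (fun (e : List (Fin k) × List (Fin k)) n => gW (e.1 ++ (e.2.map j).reverse) n)
      (fun b m n h => hgWmono _ m n h) EL (fun e he => (hgWspec _).1 (hEL e he))
    refine ⟨max (max N1 N2) (Encodable.encode (L, EL) + 1), ?_⟩
    unfold Phi
    rw [List.any_eq_true]
    refine ⟨Encodable.encode (L, EL), List.mem_range.2 ?_, ?_⟩
    · exact lt_of_lt_of_le (Nat.lt_succ_self _) (le_max_right _ _)
    · rw [Encodable.encodek]
      have h1 : (L.all fun e => gC e.2 (max (max N1 N2) (Encodable.encode (L, EL) + 1))) = true :=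
        List.all_eq_true.2 fun e he =>
          hgCmono _ _ _ (le_trans (le_max_left _ _) (le_max_left _ _)) (hN1 e he)
      have h2 : (EL.all fun e => gW (e.1 ++ (e.2.map j).reverse)
          (max (max N1 N2) (Encodable.encode (L, EL) + 1))) = true :=
        List.all_eq_true.2 fun e he =>
          hgWmono _ _ _ (le_trans (le_max_right _ _) (le_max_left _ _)) (hN2 e he)
      show (((L.all _) && (EL.all _)) && Dbool c L EL) = true
      rw [h1, h2, hD]
      rfl
  · rintro ⟨n, hn⟩
    unfold Phi at hn
    rw [List.any_eq_true] at hn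
    obtain ⟨m, -, hb⟩ := hn
    rcases hdec : (Encodable.decode (α := List (List (Fin k) × PatternCoding k A) ×
        List (List (Fin k) × List (Fin k))) m) with _ | LE
    · rw [hdec] at hb
      cases hb
    · rw [hdec] at hb
      rw [show ((some LE).elim false fun LE =>
          ((LE.1.all fun e => gC e.2 n)
            && (LE.2.all fun e => gW (e.1 ++ (e.2.map j).reverse) n))
            && Dbool c LE.1 LE.2) = (((LE.1.all fun e => gC e.2 n)
            && (LE.2.all fun e => gW (e.1 ++ (e.2.map j).reverse) n))
            && Dbool c LE.1 LE.2) from rfl, Bool.and_eq_true, Bool.and_eq_true] at hb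
      obtain ⟨⟨h1, h2⟩, h3⟩ := hb
      refine ⟨LE.1, LE.2, ?_, ?_, h3⟩
      · exact fun e he => (hgCspec e.2).2 ⟨n, List.all_eq_true.1 h1 e he⟩
      · exact fun e he => (hgWspec _).2 ⟨n, List.all_eq_true.1 h2 e he⟩


/-- Over a recursively presented group, an effectively closed subshift is
defined by its maximal set of pattern codings, which is recursively enumerable. -/
theorem maximal_codings_re
    {G : Type} [Group G] {k : ℕ} (S : Fin k → G) (hS : IsGenData S)
    (hWP : REPred (· ∈ WP S))
    {A : Type} [Fintype A] [Primcodable A] (X : Set (G → A))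
    (hsub : IsSubshift X) (hX : EffectivelyClosed S X) :
    REPred (fun c : PatternCoding k A => ¬ ∃ x ∈ X, ∀ p ∈ c, x (wordEval S p.1) = p.2) ∧
    X = XC S {c : PatternCoding k A | ¬ ∃ x ∈ X, ∀ p ∈ c, x (wordEval S p.1) = p.2} := by
  obtain ⟨C, hC, hXCeq⟩ := hX
  obtain ⟨j, hj⟩ : ∃ j : Fin k → Fin k, ∀ i, S (j i) = (S i)⁻¹ :=
    ⟨fun i => (hS.2.1 i).choose, fun i => (hS.2.1 i).choose_spec⟩
  obtain ⟨gC, hgC, hgCmono, hgCspec⟩ := staged_of_rePred hC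
  obtain ⟨gW, hgW, hgWmono, hgWspec⟩ := staged_of_rePred hWP
  constructor
  · exact (rePred_of_exists ((primrec_Phi hgC hgW j).to_comp)).of_eq fun c =>
      (Phi_iff hS hj C X hXCeq hgCmono hgCspec hgWmono hgWspec c).symm
  · ext x
    simp only [XC, Set.mem_setOf_eq]
    constructor
    · intro hx
      rintro ⟨g, c, hc, hocc⟩
      refine hc ⟨fun h => x (g * h), ?_, fun p hp => hocc p hp⟩
      simpa using hsub.2 x hx g⁻¹
    · intro hx
      by_contra hxX
      have hclosed : (letI : TopologicalSpace A := ⊥; IsClosed X) := hsub.1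
      letI : TopologicalSpace A := ⊥
      have hopen : IsOpen Xᶜ := hclosed.isOpen_compl
      obtain ⟨I, u, hu, huX⟩ := (isOpen_pi_iff.1 hopen) x hxX
      have hcmem : ¬ ∃ y ∈ X, ∀ p ∈
          (I.toList.map fun g => ((exists_word hS g).choose, x g) : PatternCoding k A),
          y (wordEval S p.1) = p.2 := by
        rintro ⟨y, hyX, hy⟩
        have hypi : y ∈ (I : Set G).pi u := by
          intro g hg
          have hp := hy ((exists_word hS g).choose, x g)
            (List.mem_map.2 ⟨g, Finset.mem_toList.2 (Finset.mem_coe.1 hg), rfl⟩)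
          rw [(exists_word hS g).choose_spec] at hp
          rw [hp]
          exact (hu g (Finset.mem_coe.1 hg)).2
        exact (huX hypi) hyX
      apply hx
      refine ⟨1, I.toList.map fun g => ((exists_word hS g).choose, x g), hcmem, ?_⟩
      rintro p hp
      obtain ⟨g, hg, rfl⟩ := List.mem_map.1 hp
      rw [one_mul, (exists_word hS g).choose_spec]

end Final

end SDG
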